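/- If G is an n-vertex triangle-free graph with chromatic number at least 3, then e(G) ≤ ⌊(n−1)²/4⌋ + 1. -/

import Mathlib

open SimpleGraph Finset

section chain
variable {V : Type*} {G : SimpleGraph V} {F : ℕ → V} {L : ℕ}

lemma chain_walk (hA : ∀ i, G.Adj (F i) (F (i+1))) (a m : ℕ) :
    ∃ p : G.Walk (F a) (F (a+m)), p.length = m := by
  induction m with
  | zero => exact ⟨Walk.nil, rfl⟩
  | succ m ih =>
    obtain ⟨p, hp⟩ := ih
    exact ⟨p.concat (hA (a+m)), by rw [Walk.length_concat, hp]⟩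

variable (hA : ∀ i, G.Adj (F i) (F (i+1)))
  (hmin : ∀ (u : V) (w : G.Walk u u), Odd w.length → L ≤ w.length)

include hA hmin

lemma min1 (a m : ℕ) (hm : Odd m) (h : F (a+m) = F a) : L ≤ m := by
  obtain ⟨p, hp⟩ := chain_walk hA a m
  have := hmin (F a) (p.copy rfl h) (by rwa [Walk.length_copy, hp])
  rwa [Walk.length_copy, hp] at this

lemma min2 (a m : ℕ) (hm : Even m) (h : G.Adj (F (a+m)) (F a)) : L ≤ m + 1 := by
  obtain ⟨p, hp⟩ := chain_walk hA a m
  have hodd : Odd (p.concat h).length := by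
    rw [Walk.length_concat, hp]; exact hm.add_one
  have := hmin (F a) (p.concat h) hodd
  rwa [Walk.length_concat, hp] at this

lemma min3 (a m : ℕ) (x : V) (hm : Odd m) (h1 : G.Adj (F (a+m)) x)
    (h2 : G.Adj x (F a)) : L ≤ m + 2 := by
  obtain ⟨p, hp⟩ := chain_walk hA a m
  have hodd : Odd ((p.concat h1).concat h2).length := by
    rw [Walk.length_concat, Walk.length_concat, hp]
    obtain ⟨c, rfl⟩ := hm; exact ⟨c+1, by ring⟩
  have := hmin (F a) ((p.concat h1).concat h2) hodd
  rwa [Walk.length_concat, Walk.length_concat, hp] at this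

end chain

lemma mantel' {V : Type*} [Fintype V] [DecidableEq V] (G : SimpleGraph V) [DecidableRel G.Adj]
    (h : G.CliqueFree 3) : 4 * #G.edgeFinset ≤ (Fintype.card V) ^ 2 := by
  set m := Fintype.card V
  set e := #G.edgeFinset with he
  have hdisj : ∀ {u v : V}, G.Adj u v → G.degree u + G.degree v ≤ m := by
    intro u v huv
    have hd : Disjoint (G.neighborFinset u) (G.neighborFinset v) := by
      rw [Finset.disjoint_left]
      intro w hwu hwv
      rw [mem_neighborFinset] at hwu hwv
      exact h {u, v, w} (is3Clique_triple_iff.2 ⟨huv, hwu, hwv⟩)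
    calc G.degree u + G.degree v
        = #(G.neighborFinset u ∪ G.neighborFinset v) := by
          rw [Finset.card_union_of_disjoint hd]; rfl
      _ ≤ m := Finset.card_le_univ _
  have hsum : ∑ v, G.degree v = 2 * e := G.sum_degrees_eq_twice_card_edges
  have hnb : ∀ (v : V) (g : V → ℕ), ∑ w ∈ G.neighborFinset v, g w
      = ∑ w, if G.Adj v w then g w else 0 := by
    intro v g
    rw [Finset.sum_ite, Finset.sum_const_zero, add_zero]
    apply Finset.sum_congr _ (fun _ _ => rfl)
    ext w; simp [mem_neighborFinset]
  have key : ∑ v, G.degree v ^ 2 ≤ e * m := by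
    have h1 : ∑ v, ∑ w ∈ G.neighborFinset v, (G.degree v + G.degree w)
        ≤ ∑ v, ∑ _w ∈ G.neighborFinset v, m :=
      Finset.sum_le_sum fun v _ => Finset.sum_le_sum fun w hw =>
        hdisj ((mem_neighborFinset _ _ _).mp hw)
    have h2 : ∑ v, ∑ _w ∈ G.neighborFinset v, m = 2 * e * m := by
      simp only [Finset.sum_const, smul_eq_mul]
      rw [← Finset.sum_mul]
      simp only [card_neighborFinset_eq_degree]
      rw [hsum]
    have h3 : ∑ v, ∑ w ∈ G.neighborFinset v, G.degree w = ∑ v, G.degree v ^ 2 := by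
      calc ∑ v, ∑ w ∈ G.neighborFinset v, G.degree w
          = ∑ v, ∑ w, (if G.Adj v w then G.degree w else 0) := by
            exact Finset.sum_congr rfl fun v _ => hnb v _
        _ = ∑ w, ∑ v, (if G.Adj v w then G.degree w else 0) := Finset.sum_comm
        _ = ∑ w, ∑ v, (if G.Adj w v then G.degree w else 0) := by
            apply Finset.sum_congr rfl; intro w _
            apply Finset.sum_congr rfl; intro v _
            simp only [adj_comm]
        _ = ∑ w, ∑ v ∈ G.neighborFinset w, G.degree w := by
            exact Finset.sum_congr rfl fun w _ => (hnb w _).symm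
        _ = ∑ w, G.degree w ^ 2 := by
            apply Finset.sum_congr rfl; intro w _
            rw [Finset.sum_const, smul_eq_mul, card_neighborFinset_eq_degree, sq]
    have h4 : ∑ v, ∑ w ∈ G.neighborFinset v, (G.degree v + G.degree w)
        = 2 * ∑ v, G.degree v ^ 2 := by
      rw [two_mul]
      calc ∑ v, ∑ w ∈ G.neighborFinset v, (G.degree v + G.degree w)
          = ∑ v, (∑ _w ∈ G.neighborFinset v, G.degree v
              + ∑ w ∈ G.neighborFinset v, G.degree w) := by
            exact Finset.sum_congr rfl fun v _ => Finset.sum_add_distrib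
        _ = ∑ v, ∑ _w ∈ G.neighborFinset v, G.degree v
            + ∑ v, ∑ w ∈ G.neighborFinset v, G.degree w := Finset.sum_add_distrib
        _ = ∑ v, G.degree v ^ 2 + ∑ v, G.degree v ^ 2 := by
            rw [h3]
            congr 1
            apply Finset.sum_congr rfl; intro v _
            rw [Finset.sum_const, smul_eq_mul, card_neighborFinset_eq_degree, sq]
    have h6 : 2 * ∑ v, G.degree v ^ 2 ≤ 2 * e * m :=
      le_trans (le_of_eq h4.symm) (le_trans h1 (le_of_eq h2))
    have h7 : 2 * e * m = 2 * (e * m) := by ring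
    omega
  have cs : (∑ v, G.degree v) ^ 2 ≤ m * ∑ v, G.degree v ^ 2 := by
    simpa using sq_sum_le_card_mul_sum_sq (s := (Finset.univ : Finset V))
      (f := fun v => (G.degree v : ℕ))
  rw [hsum] at cs
  have : 4 * e ^ 2 ≤ m ^ 2 * e := by
    calc 4 * e ^ 2 = (2 * e) ^ 2 := by ring
      _ ≤ m * (e * m) := le_trans cs (Nat.mul_le_mul_left m key)
      _ = m ^ 2 * e := by ring
  rcases Nat.eq_zero_or_pos e with h0 | h0
  · omega
  · have := Nat.le_of_mul_le_mul_right (by calc 4 * e * e = 4 * e^2 := by ring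
      _ ≤ m^2 * e := this) h0
    omega

lemma exists_odd_closed_walk' {V : Type*} (G : SimpleGraph V) (h : ¬ G.Colorable 2) :
    ∃ (v : V) (w : G.Walk v v), Odd w.length := by
  by_contra hno
  push_neg at hno
  simp only [Nat.not_odd_iff_even] at hno
  apply h
  classical
  have hreach : ∀ v : V, G.Reachable (G.connectedComponentMk v).out v := fun v =>
    ConnectedComponent.exact ((G.connectedComponentMk v).out_eq)
  have hwalk : ∀ v : V, G.Walk (G.connectedComponentMk v).out v := fun v =>
    (hreach v).some
  have hcol : ∀ {u v : V}, G.Adj u v → Nat.bodd (hwalk u).length ≠ Nat.bodd (hwalk v).length := by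
    intro u v huv
    have hcc : G.connectedComponentMk u = G.connectedComponentMk v :=
      ConnectedComponent.sound huv.reachable
    set p := hwalk u with hp
    set q := hwalk v with hq
    have e : (G.connectedComponentMk v).out = (G.connectedComponentMk u).out := by rw [hcc]
    have heven := hno _ ((p.append (Walk.cons huv q.reverse)).copy rfl e)
    rw [Walk.length_copy, Walk.length_append, Walk.length_cons, Walk.length_reverse] at heven
    intro hcon
    have hm : p.length % 2 = q.length % 2 := by
      rw [Nat.mod_two_of_bodd, Nat.mod_two_of_bodd, hcon]
    rw [Nat.even_iff] at heven
    omega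
  have C : G.Coloring Bool := Coloring.mk (fun v => Nat.bodd (hwalk v).length) hcol
  have := C.colorable
  simpa using this

/-- (Erdős) If `G` is an `n`-vertex triangle-free graph with chromatic number at least 3,
then `e(G) ≤ ⌊(n-1)²/4⌋ + 1`. -/
theorem stmt5 (n : ℕ) (G : SimpleGraph (Fin n)) (hfree : G.CliqueFree 3)
    (hchi : (3 : ℕ∞) ≤ G.chromaticNumber) :
    G.edgeSet.ncard ≤ (n - 1) ^ 2 / 4 + 1 := by
  classical
  -- not 2-colorable
  have hncol : ¬ G.Colorable 2 := by
    intro hc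
    have h2 := hc.chromaticNumber_le
    have : (3 : ℕ∞) ≤ 2 := le_trans hchi h2
    norm_num at this
  obtain ⟨v0, w0, hw0⟩ := exists_odd_closed_walk' G hncol
  -- minimal odd closed walk length
  let P : ℕ → Prop := fun k => Odd k ∧ ∃ v : Fin n, ∃ w : G.Walk v v, w.length = k
  have hP : ∃ k, P k := ⟨w0.length, hw0, v0, w0, rfl⟩
  let L := Nat.find hP
  obtain ⟨hLodd, v1, w, hwlen⟩ : P L := Nat.find_spec hP
  have hLe : ∀ (u : Fin n) (p : G.Walk u u), Odd p.length → L ≤ p.length :=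
    fun u p hp => Nat.find_min' hP ⟨hp, u, p, rfl⟩
  have hL0 : 0 < L := hLodd.pos
  -- the cyclic vertex function
  set F : ℕ → Fin n := fun i => w.getVert (i % L) with hF
  have hFlt : ∀ i, i < L → F i = w.getVert i := fun i hi => by
    simp only [hF, Nat.mod_eq_of_lt hi]
  have hA : ∀ i, G.Adj (F i) (F (i+1)) := by
    intro i
    have hmod : i % L < L := Nat.mod_lt _ hL0
    have h1 : (i + 1) % L = (i % L + 1) % L := by
      conv_lhs => rw [← Nat.mod_add_mod]
    have hadj := w.adj_getVert_succ (i := i % L) (by rw [hwlen]; exact hmod)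
    rcases eq_or_lt_of_le (Nat.succ_le_of_lt hmod) with he | hlt
    · -- i % L + 1 = L : wraps around
      have he : i % L + 1 = L := he
      have h2 : (i + 1) % L = 0 := by rw [h1, he, Nat.mod_self]
      have h3 : w.getVert (i % L + 1) = w.getVert 0 := by
        rw [he, ← hwlen, Walk.getVert_length, Walk.getVert_zero]
      simp only [hF, h2]
      rw [← h3]; exact hadj
    · have h2 : (i + 1) % L = i % L + 1 := by rw [h1, Nat.mod_eq_of_lt hlt]
      simp only [hF, h2]; exact hadj
  have hFper : ∀ i, F (i + L) = F i := fun i => by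
    simp only [hF, Nat.add_mod_right]
  -- injectivity
  have hinj : ∀ i j, i < L → j < L → F i = F j → i = j := by
    have key : ∀ i j, i < j → j < L → F i ≠ F j := by
      intro i j hij hjL heq
      set d := j - i with hd
      have hid : i + d = j := by omega
      rcases Nat.even_or_odd d with hde | hdo
      · -- use the complementary arc
        have hjd : j + (L - d) = i + L := by omega
        have : L ≤ L - d := by
          refine min1 hA hLe j (L - d) ?_ ?_
          · rw [Nat.odd_sub (by omega)]
            simp [Nat.odd_iff.mp hLodd, Nat.even_iff.mp hde, Nat.odd_iff, Nat.even_iff]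
          · rw [hjd, hFper, heq]
        omega
      · have : L ≤ d := min1 hA hLe i d hdo (by rw [hid, heq])
        omega
    intro i j hi hj heq
    rcases lt_trichotomy i j with h | h | h
    · exact absurd heq (key i j h hj)
    · exact h
    · exact absurd heq.symm (key j i h hi)
  have hL5 : 5 ≤ L := by
    rcases Nat.lt_or_ge L 5 with h5 | h5
    · exfalso
      interval_cases L
      · -- L = 1 : loop
        have := hA 0
        have h1 : F 1 = F 0 := by simp [hF, Nat.mod_self]
        rw [h1] at this
        exact G.loopless.irrefl _ this
      · exact absurd hLodd (by decide)
      · -- L = 3 : triangle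
        have h01 := hA 0
        have h12 := hA 1
        have h20 := hA 2
        have h3 : F 3 = F 0 := by simp [hF]
        rw [h3] at h20
        exact hfree {F 0, F 1, F 2} (is3Clique_triple_iff.2 ⟨h01, h20.symm, h12⟩)
      · exact absurd hLodd (by decide)
    · exact h5
  -- the vertex set of the cycle
  set S : Finset (Fin n) := (range L).image F with hS
  have hcardS : #S = L := by
    rw [hS, Finset.card_image_of_injOn, Finset.card_range]
    intro i hi j hj
    exact hinj i j (Finset.mem_range.1 hi) (Finset.mem_range.1 hj)
  have hLn : L ≤ n := by
    calc L = #S := hcardS.symm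
    _ ≤ #(univ : Finset (Fin n)) := Finset.card_le_univ S
    _ = n := by simp
  -- edges inside S are cycle edges
  have hedge : ∀ i j, i < j → j < L → G.Adj (F i) (F j) →
      (j = i + 1 ∨ (i = 0 ∧ j = L - 1)) := by
    intro i j hij hjL hadj
    set d := j - i with hd
    have hid : i + d = j := by omega
    rcases Nat.even_or_odd d with hde | hdo
    · -- closed walk of length d+1 at F i
      have : L ≤ d + 1 := by
        refine min2 hA hLe i d hde ?_
        rw [hid]; exact hadj.symm
      -- d ≥ L - 1, but d ≤ L - 1 so d = L - 1
      right; omega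
    · -- complementary: closed walk of length (L-d)+1 at F j
      have hjd : j + (L - d) = i + L := by omega
      have : L ≤ (L - d) + 1 := by
        refine min2 hA hLe j (L - d) ?_ ?_
        · rw [Nat.even_sub (by omega)]
          simp [Nat.odd_iff.mp hLodd, Nat.odd_iff.mp hdo, Nat.even_iff]
        · rw [hjd, hFper]; exact hadj
      left; omega
  -- vertices adjacent to two cycle vertices: arc distance is 2 or L-2
  have houts : ∀ (x : Fin n) i j, i < j → j < L → G.Adj x (F i) → G.Adj x (F j) →
      (j - i = 2 ∨ j - i = L - 2) := by
    intro x i j hij hjL hxi hxj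
    set d := j - i with hd
    have hid : i + d = j := by omega
    have hd1 : d ≠ 1 := by
      intro h1
      have : F j = F (i+1) := by rw [← hid, h1]
      rw [this] at hxj
      exact hfree {x, F i, F (i+1)} (is3Clique_triple_iff.2 ⟨hxi, hxj, hA i⟩)
    have hdL1 : d ≠ L - 1 := by
      intro h1
      have hi0 : i = 0 ∧ j = L - 1 := by omega
      have hadjji : G.Adj (F j) (F (j+1)) := hA j
      have : F (j + 1) = F i := by
        have : j + 1 = i + L := by omega
        rw [this, hFper]
      rw [this] at hadjji
      exact hfree {x, F j, F i} (is3Clique_triple_iff.2 ⟨hxj, hxi, hadjji⟩)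
    rcases Nat.even_or_odd d with hde | hdo
    · -- closed walk of length (L-d)+2 at F j
      have hjd : j + (L - d) = i + L := by omega
      have : L ≤ (L - d) + 2 := by
        refine min3 hA hLe j (L - d) x ?_ ?_ hxj
        · rw [Nat.odd_sub (by omega)]
          simp [Nat.odd_iff.mp hLodd, Nat.even_iff.mp hde, Nat.odd_iff, Nat.even_iff]
        · rw [hjd, hFper]; exact hxi.symm
      left; omega
    · -- closed walk of length d+2 at F i
      have : L ≤ d + 2 := by
        refine min3 hA hLe i d x hdo ?_ hxi
        rw [hid]; exact hxj.symm
      right; omega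
  -- each vertex outside S has at most 2 neighbors in S
  have hnbr : ∀ x : Fin n, #(G.neighborFinset x ∩ S) ≤ 2 := by
    intro x
    by_contra hc
    push_neg at hc
    obtain ⟨a, ha, b, hb, c, hc', hab, hac, hbc⟩ := Finset.two_lt_card.1 hc
    simp only [Finset.mem_inter, mem_neighborFinset, hS, Finset.mem_image,
      Finset.mem_range] at ha hb hc'
    obtain ⟨hxa, ia, hia, rfl⟩ := ha
    obtain ⟨hxb, ib, hib, rfl⟩ := hb
    obtain ⟨hxc, ic, hic, rfl⟩ := hc'
    have hne1 : ia ≠ ib := fun h => hab (by rw [h])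
    have hne2 : ia ≠ ic := fun h => hac (by rw [h])
    have hne3 : ib ≠ ic := fun h => hbc (by rw [h])
    have hLmod : L % 2 = 1 := Nat.odd_iff.mp hLodd
    -- sort the three indices and derive contradiction
    have key : ∀ p q r, p < q → q < r → r < L →
        G.Adj x (F p) → G.Adj x (F q) → G.Adj x (F r) → False := by
      intro p q r hpq hqr hrL hp hq hr
      have h1 := houts x p q hpq (by omega) hp hq
      have h2 := houts x q r hqr hrL hq hr
      have h3 := houts x p r (by omega) hrL hp hr
      omega
    rcases lt_trichotomy ia ib with h1 | h1 | h1 <;>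
      rcases lt_trichotomy ib ic with h2 | h2 | h2 <;>
      rcases lt_trichotomy ia ic with h3 | h3 | h3 <;>
      first
        | exact absurd h1 hne1 | exact absurd h2 hne3 | exact absurd h3 hne2
        | exact key ia ib ic h1 h2 hic hxa hxb hxc
        | exact key ia ic ib h3 (by omega) hib hxa hxc hxb
        | exact key ib ia ic (by omega) h3 hic hxb hxa hxc
        | exact key ib ic ia h2 (by omega) hia hxb hxc hxa
        | exact key ic ia ib (by omega) h1 hib hxc hxa hxb
        | exact key ic ib ia (by omega) (by omega) hia hxc hxb hxa
        | omega
  -- edge counting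
  set eF := G.edgeFinset with heF
  -- edges inside S correspond to cycle edges
  have haux : ∀ a b : Fin n, G.Adj a b → a ∈ S → b ∈ S →
      ∃ i, i < L ∧ s(a, b) = s(F i, F (i+1)) := by
    have haux2 : ∀ i j, i < j → j < L → G.Adj (F i) (F j) →
        ∃ k, k < L ∧ s(F i, F j) = s(F k, F (k+1)) := by
      intro i j hij hjL hadj
      rcases hedge i j hij hjL hadj with h | ⟨hi0, hj⟩
      · exact ⟨i, by omega, by rw [← h]⟩
      · refine ⟨j, by omega, ?_⟩
        have : F (j + 1) = F i := by
          have hj1 : j + 1 = i + L := by omega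
          rw [hj1, hFper]
        rw [this, Sym2.eq_swap]
    intro a b hadj ha hb
    rw [hS] at ha hb
    obtain ⟨i, hi, rfl⟩ := Finset.mem_image.1 ha
    obtain ⟨j, hj, rfl⟩ := Finset.mem_image.1 hb
    rw [Finset.mem_range] at hi hj
    rcases lt_trichotomy i j with h | h | h
    · exact haux2 i j h hj hadj
    · exact absurd (h ▸ rfl : F i = F j) hadj.ne
    · obtain ⟨k, hk, hk2⟩ := haux2 j i h hi hadj.symm
      exact ⟨k, hk, by rw [Sym2.eq_swap]; exact hk2⟩
  have hT1 : #(eF.filter (fun e => ∀ x ∈ e, x ∈ S)) ≤ L := by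
    have hsub : eF.filter (fun e => ∀ x ∈ e, x ∈ S) ⊆
        (range L).image (fun i => s(F i, F (i+1))) := by
      intro e he
      simp only [Finset.mem_filter, heF, mem_edgeFinset] at he
      induction e with
      | _ a b =>
        obtain ⟨hadj, hall⟩ := he
        rw [mem_edgeSet] at hadj
        obtain ⟨i, hi, hi2⟩ := haux a b hadj
          (hall a (Sym2.mem_mk_left a b)) (hall b (Sym2.mem_mk_right a b))
        rw [Finset.mem_image]
        exact ⟨i, Finset.mem_range.2 hi, hi2.symm⟩
    calc #(eF.filter (fun e => ∀ x ∈ e, x ∈ S))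
        ≤ #((range L).image (fun i => s(F i, F (i+1)))) := Finset.card_le_card hsub
      _ ≤ #(range L) := Finset.card_image_le
      _ = L := Finset.card_range L
  -- crossing edges
  have hT2 : #(eF.filter (fun e => ¬ (∀ x ∈ e, x ∈ S) ∧ ¬ (∀ x ∈ e, x ∉ S)))
      ≤ 2 * (n - L) := by
    set B := (univ \ S).biUnion
      (fun v => (G.neighborFinset v ∩ S).image (fun x => s(v, x))) with hB
    have hsub : eF.filter (fun e => ¬ (∀ x ∈ e, x ∈ S) ∧ ¬ (∀ x ∈ e, x ∉ S)) ⊆ B := by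
      intro e he
      simp only [Finset.mem_filter, heF, mem_edgeFinset] at he
      induction e with
      | _ a b =>
        obtain ⟨hadj, hn1, hn2⟩ := he
        rw [mem_edgeSet] at hadj
        push_neg at hn1 hn2
        obtain ⟨x, hx, hxS⟩ := hn1
        obtain ⟨y, hy, hyS⟩ := hn2
        rw [Sym2.mem_iff] at hx hy
        have hcase : (a ∉ S ∧ b ∈ S) ∨ (b ∉ S ∧ a ∈ S) := by
          rcases hx with rfl | rfl <;> rcases hy with rfl | rfl <;> tauto
        rw [hB, Finset.mem_biUnion]
        rcases hcase with ⟨haS, hbS⟩ | ⟨hbS, haS⟩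
        · refine ⟨a, by simp [haS], ?_⟩
          rw [Finset.mem_image]
          exact ⟨b, by simp [mem_neighborFinset, hadj, hbS], rfl⟩
        · refine ⟨b, by simp [hbS], ?_⟩
          rw [Finset.mem_image]
          exact ⟨a, by simp [mem_neighborFinset, hadj.symm, haS], Sym2.eq_swap⟩
    calc #(eF.filter (fun e => ¬ (∀ x ∈ e, x ∈ S) ∧ ¬ (∀ x ∈ e, x ∉ S)))
        ≤ #B := Finset.card_le_card hsub
      _ ≤ ∑ v ∈ univ \ S, #((G.neighborFinset v ∩ S).image (fun x => s(v, x))) :=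
          Finset.card_biUnion_le
      _ ≤ ∑ _v ∈ univ \ S, 2 := Finset.sum_le_sum fun v _ =>
          le_trans Finset.card_image_le (hnbr v)
      _ = #(univ \ S) * 2 := by rw [Finset.sum_const, smul_eq_mul]
      _ = 2 * (n - L) := by
          rw [Finset.card_sdiff_of_subset (Finset.subset_univ S), hcardS]
          simp [Nat.mul_comm]
  -- edges outside S
  have hT3 : 4 * #(eF.filter (fun e => ∀ x ∈ e, x ∉ S)) ≤ (n - L) ^ 2 := by
    set s' : Set (Fin n) := ((univ \ S : Finset (Fin n)) : Set (Fin n)) with hs'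
    have hcard' : Fintype.card s' = n - L := by
      have h0 : Fintype.card s' = #(univ \ S) := Fintype.card_coe _
      rw [h0, Finset.card_sdiff_of_subset (Finset.subset_univ S), hcardS]
      simp
    have hcf : (G.induce s').CliqueFree 3 := hfree.comap (Embedding.induce s').isContained
    have hm := mantel' (G.induce s') hcf
    rw [hcard'] at hm
    refine le_trans ?_ hm
    have hsub : eF.filter (fun e => ∀ x ∈ e, x ∉ S) ⊆
        (G.induce s').edgeFinset.image (Sym2.map Subtype.val) := by
      intro e he
      simp only [Finset.mem_filter, heF, mem_edgeFinset] at he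
      induction e with
      | _ a b =>
        obtain ⟨hadj, hall⟩ := he
        rw [mem_edgeSet] at hadj
        have haS : a ∈ s' := by
          simp only [hs', Finset.coe_sdiff, Finset.coe_univ, Set.mem_diff, Set.mem_univ,
            true_and, Finset.mem_coe]
          exact hall a (Sym2.mem_mk_left a b)
        have hbS : b ∈ s' := by
          simp only [hs', Finset.coe_sdiff, Finset.coe_univ, Set.mem_diff, Set.mem_univ,
            true_and, Finset.mem_coe]
          exact hall b (Sym2.mem_mk_right a b)
        rw [Finset.mem_image]
        refine ⟨s(⟨a, haS⟩, ⟨b, hbS⟩), ?_, rfl⟩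
        rw [mem_edgeFinset, mem_edgeSet]
        exact hadj
    have := Finset.card_le_card hsub
    have himg : #((G.induce s').edgeFinset.image (Sym2.map Subtype.val))
        = #(G.induce s').edgeFinset :=
      Finset.card_image_of_injective _ (Sym2.map.injective Subtype.val_injective)
    omega
  -- put the three bounds together
  have hsplit : #eF ≤ L + 2 * (n - L) + #(eF.filter (fun e => ∀ x ∈ e, x ∉ S)) := by
    have h1 := Finset.card_filter_add_card_filter_not
      (s := eF) (p := fun e => ∀ x ∈ e, x ∈ S)
    have h2 := Finset.card_filter_add_card_filter_not
      (s := eF.filter (fun e => ¬ (∀ x ∈ e, x ∈ S))) (p := fun e => ∀ x ∈ e, x ∉ S)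
    have h3 : (eF.filter (fun e => ¬ (∀ x ∈ e, x ∈ S))).filter (fun e => ∀ x ∈ e, x ∉ S)
        ⊆ eF.filter (fun e => ∀ x ∈ e, x ∉ S) :=
      Finset.filter_subset_filter _ (Finset.filter_subset _ _)
    have h4 : (eF.filter (fun e => ¬ (∀ x ∈ e, x ∈ S))).filter (fun e => ¬ ∀ x ∈ e, x ∉ S)
        = eF.filter (fun e => ¬ (∀ x ∈ e, x ∈ S) ∧ ¬ (∀ x ∈ e, x ∉ S)) := by
      rw [Finset.filter_filter]
    have h5 := Finset.card_le_card h3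
    have h4' : #((eF.filter (fun e => ¬ (∀ x ∈ e, x ∈ S))).filter (fun e => ¬ ∀ x ∈ e, x ∉ S))
        = #(eF.filter (fun e => ¬ (∀ x ∈ e, x ∈ S) ∧ ¬ (∀ x ∈ e, x ∉ S))) := by rw [h4]
    omega
  -- final arithmetic
  have hgoal : 4 * #eF ≤ (n - 1) ^ 2 + 4 := by
    obtain ⟨k, hk⟩ := hLodd
    have hk2 : 2 ≤ k := by omega
    have hm1 : 2 * (n - L) ≤ k * (n - L) := Nat.mul_le_mul_right _ hk2
    have hm2 : 2 * k ≤ k * k := Nat.mul_le_mul_right _ hk2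
    have hn1 : n - 1 = (n - L) + 2 * k := by omega
    have hexp : ((n - L) + 2 * k) ^ 2 = (n - L) ^ 2 + 4 * (k * (n - L)) + 4 * (k * k) := by
      ring
    have hT3' := hT3
    have := hsplit
    nlinarith [hT3, hsplit, hm1, hm2]
  rw [← coe_edgeFinset, Set.ncard_coe_finset]
  rw [heF] at hgoal
  omega
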